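/- For all integers n ≥ k ≥ 1, there exists a family F of k-element subsets of {1,…,n} such that |S ∩ T| ≤ k/3 for all distinct S, T ∈ F, and |F| ≥ (n/(8k))^{k/3} = 2^{−k}(n/k)^{k/3}. -/

import Mathlib

lemma aux_desc (n k : ℕ) (hkn : k ≤ n) :
    ∀ m, m ≤ k → n ^ m * k.descFactorial m ≤ k ^ m * n.descFactorial m := by
  intro m
  induction m with
  | zero => simp
  | succ m ih =>
    intro hmk
    have hm : m ≤ k := Nat.le_of_succ_le hmk
    have hmn : m ≤ n := le_trans hm hkn
    have IH := ih hm
    have key : n * (k - m) ≤ k * (n - m) := by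
      zify [hm, hmn]
      nlinarith [mul_nonneg (by positivity : (0:ℤ) ≤ (m:ℤ))
        (by exact_mod_cast sub_nonneg.mpr (by exact_mod_cast hkn : (k:ℝ) ≤ n) : (0:ℤ) ≤ (n:ℤ) - (k:ℤ))]
    rw [Nat.descFactorial_succ, Nat.descFactorial_succ]
    calc n ^ (m+1) * ((k - m) * k.descFactorial m)
        = (n * (k - m)) * (n ^ m * k.descFactorial m) := by ring
      _ ≤ (k * (n - m)) * (k ^ m * n.descFactorial m) := Nat.mul_le_mul key IH
      _ = k ^ (m+1) * ((n - m) * n.descFactorial m) := by ring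

lemma aux_choose (n k m : ℕ) (hkn : k ≤ n) (hm : m ≤ k) :
    n ^ m * k.choose m ≤ k ^ m * n.choose m := by
  have h := aux_desc n k hkn m hm
  rw [Nat.descFactorial_eq_factorial_mul_choose, Nat.descFactorial_eq_factorial_mul_choose] at h
  have hf : 0 < (Nat.factorial m) := Nat.factorial_pos m
  have : (Nat.factorial m) * (n ^ m * k.choose m) ≤ (Nat.factorial m) * (k ^ m * n.choose m) := by
    calc (Nat.factorial m) * (n ^ m * k.choose m) = n ^ m * ((Nat.factorial m) * k.choose m) := by ring
      _ ≤ k ^ m * ((Nat.factorial m) * n.choose m) := h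
      _ = (Nat.factorial m) * (k ^ m * n.choose m) := by ring
  exact Nat.le_of_mul_le_mul_left this hf

lemma aux_two_pow (k m : ℕ) (hm : m ≤ k) : k.choose m ≤ 2 ^ k := by
  calc k.choose m ≤ ∑ i ∈ Finset.range (k+1), k.choose i :=
        Finset.single_le_sum (fun i _ => Nat.zero_le _) (Finset.mem_range.mpr (Nat.lt_succ_of_le hm))
    _ = 2 ^ k := Nat.sum_range_choose k

/-- **Greedy packing of conjunctions.** For all `n ≥ k ≥ 1` there is a family `F` of
`k`-element subsets of `{1,…,n}` with pairwise intersections of size at most `k/3` and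
`|F| ≥ (n/(8k))^{k/3}`; moreover `(n/(8k))^{k/3} = 2^{-k}·(n/k)^{k/3}`. -/
theorem exists_packing_of_k_sets (n k : ℕ) (hk : 1 ≤ k) (hkn : k ≤ n) :
    ((n:ℝ) / (8 * (k:ℝ))) ^ ((k:ℝ)/3) =
      (2:ℝ) ^ (-(k:ℝ)) * ((n:ℝ) / (k:ℝ)) ^ ((k:ℝ)/3) ∧
    ∃ F : Finset (Finset (Fin n)),
      (∀ S ∈ F, S.card = k) ∧
      (∀ S ∈ F, ∀ T ∈ F, S ≠ T → ((S ∩ T).card : ℝ) ≤ (k:ℝ)/3) ∧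
      ((n:ℝ) / (8 * (k:ℝ))) ^ ((k:ℝ)/3) ≤ (F.card : ℝ) := by
  classical
  have hk0 : (0:ℝ) < k := by exact_mod_cast hk
  have hn0 : (0:ℝ) < n := by exact_mod_cast lt_of_lt_of_le hk hkn
  set m : ℕ := k / 3 + 1 with hm_def
  have hmk : m ≤ k := Nat.succ_le_of_lt (Nat.div_lt_self hk (by norm_num))
  have hchar : ∀ c : ℕ, ¬((c:ℝ) ≤ (k:ℝ)/3) → m ≤ c := by
    intro c hc
    rw [not_le, div_lt_iff₀ (by norm_num : (0:ℝ) < 3)] at hc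
    have : k < c * 3 := by exact_mod_cast hc
    omega
  -- the equality of the two expressions
  have h18 : (2:ℝ) ^ (-3:ℝ) = 1/8 := by
    rw [show (-3:ℝ) = ((-3:ℤ):ℝ) by norm_num, Real.rpow_intCast]
    norm_num
  have heq : ((n:ℝ) / (8 * (k:ℝ))) ^ ((k:ℝ)/3) =
      (2:ℝ) ^ (-(k:ℝ)) * ((n:ℝ) / (k:ℝ)) ^ ((k:ℝ)/3) := by
    have h2 : (2:ℝ) ^ (-(k:ℝ)) = ((1:ℝ)/8) ^ ((k:ℝ)/3) := by
      rw [← h18, ← Real.rpow_mul (by norm_num : (0:ℝ) ≤ 2)]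
      ring_nf
    rw [h2, ← Real.mul_rpow (by norm_num) (by positivity)]
    congr 1
    field_simp
  refine ⟨heq, ?_⟩
  -- set up the packing
  set PP := Finset.powersetCard k (Finset.univ : Finset (Fin n)) with hP
  have hPcard : PP.card = n.choose k := by
    rw [hP, Finset.card_powersetCard, Finset.card_univ, Fintype.card_fin]
  set good : Finset (Finset (Fin n)) → Prop :=
    fun F => ∀ S ∈ F, ∀ T ∈ F, S ≠ T → ((S ∩ T).card : ℝ) ≤ (k:ℝ)/3 with hgood
  have hne : (PP.powerset.filter good).Nonempty :=
    ⟨∅, by simp [hgood]⟩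
  obtain ⟨F, hFmem, hFmax⟩ := Finset.exists_max_image _ Finset.card hne
  rw [Finset.mem_filter, Finset.mem_powerset] at hFmem
  obtain ⟨hFP, hFgood⟩ := hFmem
  have hcards : ∀ S ∈ F, S.card = k := fun S hS => (Finset.mem_powersetCard.mp (hFP hS)).2
  refine ⟨F, hcards, hFgood, ?_⟩
  -- maximality gives a covering property
  have hcover : ∀ T ∈ PP, ∃ S ∈ F, m ≤ (S ∩ T).card := by
    intro T hT
    by_cases hTF : T ∈ F
    · exact ⟨T, hTF, by rw [Finset.inter_self, hcards T hTF]; exact hmk⟩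
    · by_contra hcon
      push_neg at hcon
      have hgood' : good (insert T F) := by
        intro A hA B hB hAB
        rcases Finset.mem_insert.mp hA with rfl | hA'
        · rcases Finset.mem_insert.mp hB with rfl | hB'
          · exact absurd rfl hAB
          · by_contra hx
            have h1 := hchar _ hx
            rw [Finset.inter_comm] at h1
            exact absurd h1 (not_le.mpr (hcon B hB'))
        · rcases Finset.mem_insert.mp hB with rfl | hB'
          · by_contra hx
            exact absurd (hchar _ hx) (not_le.mpr (hcon A hA'))
          · exact hFgood A hA' B hB' hAB
      have hmem' : insert T F ∈ PP.powerset.filter good := by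
        rw [Finset.mem_filter, Finset.mem_powerset]
        exact ⟨Finset.insert_subset hT hFP, hgood'⟩
      have := hFmax _ hmem'
      rw [Finset.card_insert_of_notMem hTF] at this
      omega
  -- counting
  have hsub : PP ⊆ F.biUnion (fun S => PP.filter (fun T => m ≤ (S ∩ T).card)) := by
    intro T hT
    obtain ⟨S, hS, hmS⟩ := hcover T hT
    exact Finset.mem_biUnion.mpr ⟨S, hS, Finset.mem_filter.mpr ⟨hT, hmS⟩⟩
  have hinner : ∀ S ∈ F, (PP.filter (fun T => m ≤ (S ∩ T).card)).card
      ≤ k.choose m * (n - m).choose (k - m) := by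
    intro S hS
    have hSk := hcards S hS
    have hsub2 : PP.filter (fun T => m ≤ (S ∩ T).card) ⊆
        (S.powersetCard m).biUnion (fun A => PP.filter (fun T => A ⊆ T)) := by
      intro T hT
      rw [Finset.mem_filter] at hT
      obtain ⟨hT1, hT2⟩ := hT
      obtain ⟨A, hA, hAcard⟩ := Finset.exists_subset_card_eq hT2
      exact Finset.mem_biUnion.mpr ⟨A,
        Finset.mem_powersetCard.mpr ⟨hA.trans Finset.inter_subset_left, hAcard⟩,
        Finset.mem_filter.mpr ⟨hT1, hA.trans Finset.inter_subset_right⟩⟩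
    have hper : ∀ A ∈ S.powersetCard m,
        (PP.filter (fun T => A ⊆ T)).card ≤ (n - m).choose (k - m) := by
      intro A hA
      have hAcard : A.card = m := (Finset.mem_powersetCard.mp hA).2
      have hcc : ((Finset.univ \ A).powersetCard (k - m)).card = (n - m).choose (k - m) := by
        rw [Finset.card_powersetCard, Finset.card_sdiff_of_subset (Finset.subset_univ A),
          Finset.card_univ, Fintype.card_fin, hAcard]
      rw [← hcc]
      apply Finset.card_le_card_of_injOn (fun T => T \ A)
      · intro T hT
        rw [Finset.mem_coe, Finset.mem_filter] at hT
        obtain ⟨hT1, hT2⟩ := hT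
        have hTk : T.card = k := (Finset.mem_powersetCard.mp hT1).2
        refine Finset.mem_powersetCard.mpr ⟨Finset.sdiff_subset_sdiff (Finset.subset_univ T) le_rfl, ?_⟩
        rw [Finset.card_sdiff_of_subset hT2, hTk, hAcard]
      · intro T1 h1 T2 h2 heq2
        simp only [Finset.mem_coe, Finset.mem_filter] at h1 h2
        have e1 : T1 \ A ∪ A = T1 := Finset.sdiff_union_of_subset h1.2
        have e2 : T2 \ A ∪ A = T2 := Finset.sdiff_union_of_subset h2.2
        rw [← e1, ← e2]
        simp only at heq2
        rw [heq2]
    calc (PP.filter (fun T => m ≤ (S ∩ T).card)).card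
        ≤ ((S.powersetCard m).biUnion (fun A => PP.filter (fun T => A ⊆ T))).card :=
          Finset.card_le_card hsub2
      _ ≤ ∑ A ∈ S.powersetCard m, (PP.filter (fun T => A ⊆ T)).card := Finset.card_biUnion_le
      _ ≤ ∑ _A ∈ S.powersetCard m, (n - m).choose (k - m) := Finset.sum_le_sum hper
      _ = k.choose m * (n - m).choose (k - m) := by
          rw [Finset.sum_const, Finset.card_powersetCard, hSk, smul_eq_mul]
  have hcount : n.choose k ≤ F.card * (k.choose m * (n - m).choose (k - m)) := by
    calc n.choose k = PP.card := hPcard.symm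
      _ ≤ (F.biUnion (fun S => PP.filter (fun T => m ≤ (S ∩ T).card))).card :=
          Finset.card_le_card hsub
      _ ≤ ∑ S ∈ F, (PP.filter (fun T => m ≤ (S ∩ T).card)).card := Finset.card_biUnion_le
      _ ≤ ∑ _S ∈ F, k.choose m * (n - m).choose (k - m) := Finset.sum_le_sum hinner
      _ = F.card * (k.choose m * (n - m).choose (k - m)) := by
          rw [Finset.sum_const, smul_eq_mul]
  have hid : n.choose k * k.choose m = n.choose m * (n - m).choose (k - m) :=
    Nat.choose_mul hmk
  have hpos : 0 < (n - m).choose (k - m) := Nat.choose_pos (by omega)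
  have hkey : n.choose m ≤ F.card * (k.choose m)^2 := by
    have h1 : n.choose m * (n - m).choose (k - m)
        ≤ (F.card * (k.choose m)^2) * (n - m).choose (k - m) := by
      calc n.choose m * (n - m).choose (k - m) = n.choose k * k.choose m := hid.symm
        _ ≤ (F.card * (k.choose m * (n - m).choose (k - m))) * k.choose m :=
            Nat.mul_le_mul_right _ hcount
        _ = (F.card * (k.choose m)^2) * (n - m).choose (k - m) := by ring
    exact Nat.le_of_mul_le_mul_right h1 hpos
  -- now pass to the reals
  have hchoose_pos : 0 < (k.choose m : ℝ) := by exact_mod_cast Nat.choose_pos hmk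
  have h2k : (k.choose m : ℝ) ≤ 2^k := by exact_mod_cast aux_two_pow k m hmk
  have hratio : ((n:ℝ)/k)^m * (k.choose m : ℝ) ≤ (n.choose m : ℝ) := by
    have hre : (n:ℝ)^m * k.choose m ≤ (k:ℝ)^m * n.choose m := by
      exact_mod_cast aux_choose n k m hkn hmk
    rw [div_pow, div_mul_eq_mul_div, div_le_iff₀ (by positivity)]
    calc (n:ℝ)^m * k.choose m ≤ (k:ℝ)^m * n.choose m := hre
      _ = (n.choose m : ℝ) * (k:ℝ)^m := by ring
  have hF : ((n:ℝ)/k)^m / 2^k ≤ (F.card : ℝ) := by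
    have hc : (n.choose m : ℝ) ≤ (F.card : ℝ) * (k.choose m : ℝ)^2 := by exact_mod_cast hkey
    have h3 : ((n:ℝ)/k)^m * (k.choose m : ℝ) ≤ ((F.card : ℝ) * (k.choose m : ℝ)) * (k.choose m : ℝ) := by
      calc ((n:ℝ)/k)^m * (k.choose m : ℝ) ≤ (n.choose m : ℝ) := hratio
        _ ≤ (F.card : ℝ) * (k.choose m : ℝ)^2 := hc
        _ = ((F.card : ℝ) * (k.choose m : ℝ)) * (k.choose m : ℝ) := by ring
    have h4 : ((n:ℝ)/k)^m ≤ (F.card : ℝ) * (k.choose m : ℝ) :=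
      le_of_mul_le_mul_right h3 hchoose_pos
    rw [div_le_iff₀ (by positivity)]
    calc ((n:ℝ)/k)^m ≤ (F.card : ℝ) * (k.choose m : ℝ) := h4
      _ ≤ (F.card : ℝ) * 2^k := mul_le_mul_of_nonneg_left h2k (Nat.cast_nonneg _)
  rw [heq]
  have hbase : (1:ℝ) ≤ (n:ℝ)/k := (one_le_div hk0).mpr (by exact_mod_cast hkn)
  have hexp : (k:ℝ)/3 ≤ (m:ℝ) := by
    rw [div_le_iff₀ (by norm_num : (0:ℝ) < 3)]
    have : k ≤ m * 3 := by omega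
    exact_mod_cast this
  calc (2:ℝ) ^ (-(k:ℝ)) * ((n:ℝ)/k) ^ ((k:ℝ)/3)
      ≤ (2:ℝ) ^ (-(k:ℝ)) * ((n:ℝ)/k) ^ ((m:ℝ)) :=
        mul_le_mul_of_nonneg_left
          (Real.rpow_le_rpow_of_exponent_le hbase hexp) (by positivity)
    _ = ((n:ℝ)/k)^m / 2^k := by
        rw [Real.rpow_natCast, Real.rpow_neg (by norm_num : (0:ℝ) ≤ 2),
          ← Real.rpow_natCast 2 k]
        ring
    _ ≤ (F.card : ℝ) := hF
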